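/- Let 0 < x₂ ≤ ∞ and μ > 0. Then lim_{t→∞} t^μ ∫₀^{x₂} x^{μ−1} (1+x)^{−t} dx = Γ(μ), where Γ is the Gamma function. (In particular the limit is independent of x₂.) -/

import Mathlib

open MeasureTheory Filter Set Real

/-- Bernoulli-type monotonicity: `(1+y/t)^(-t)` is antitone in `t` for `y ≥ 0`. -/
lemma aux_rpow_anti {y T₀ t : ℝ} (hy : 0 ≤ y) (hT₀ : 0 < T₀) (ht : T₀ ≤ t) :
    (1 + y / t) ^ (-t) ≤ (1 + y / T₀) ^ (-T₀) := by
  have ht0 : 0 < t := hT₀.trans_le ht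
  have h1 : (0:ℝ) < 1 + y / t := by positivity
  have h2 : (0:ℝ) < 1 + y / T₀ := by positivity
  have hB : 1 + y / T₀ ≤ (1 + y / t) ^ (t / T₀) := by
    have hb := one_add_mul_self_le_rpow_one_add (s := y / t)
      (le_trans (by norm_num) (by positivity : (0:ℝ) ≤ y / t))
      (p := t / T₀) ((one_le_div hT₀).mpr ht)
    have heq : t / T₀ * (y / t) = y / T₀ := by
      field_simp
    rw [heq] at hb
    exact hb
  have hpow : (1 + y / T₀) ^ T₀ ≤ (1 + y / t) ^ t := by
    calc (1 + y / T₀) ^ T₀ ≤ ((1 + y / t) ^ (t / T₀)) ^ T₀ :=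
          Real.rpow_le_rpow h2.le hB hT₀.le
      _ = (1 + y / t) ^ t := by
          rw [← Real.rpow_mul h1.le, div_mul_cancel₀ _ hT₀.ne']
  rw [Real.rpow_neg h1.le, Real.rpow_neg h2.le]
  exact inv_anti₀ (Real.rpow_pos_of_pos h2 _) hpow

/-- Integrability of the dominating function. -/
lemma aux_integrable {μ : ℝ} (hμ : 0 < μ) :
    IntegrableOn (fun y : ℝ => y ^ (μ - 1) * (1 + y / (μ + 1)) ^ (-(μ + 1)))
      (Ioi 0) volume := by
  set T₀ := μ + 1 with hT₀def
  have hT₀ : 0 < T₀ := by positivity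
  have hmeas : Measurable fun y : ℝ => y ^ (μ - 1) * (1 + y / T₀) ^ (-T₀) := by
    fun_prop
  have hIoc : IntegrableOn (fun y : ℝ => y ^ (μ - 1) * (1 + y / T₀) ^ (-T₀))
      (Ioc (0:ℝ) 1) volume := by
    have hint : IntegrableOn (fun y : ℝ => y ^ (μ - 1)) (Ioc (0:ℝ) 1) volume := by
      have := (intervalIntegral.intervalIntegrable_rpow' (r := μ - 1) (by linarith) (a := 0) (b := 1))
      rwa [intervalIntegrable_iff_integrableOn_Ioc_of_le (by norm_num)] at this
    refine hint.mono' (hmeas.aestronglyMeasurable.restrict) ?_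
    filter_upwards [ae_restrict_mem measurableSet_Ioc] with y hy
    have hy0 : 0 < y := hy.1
    have h1 : (0:ℝ) < 1 + y / T₀ := by positivity
    rw [Real.norm_eq_abs, abs_mul, abs_of_nonneg (Real.rpow_nonneg hy0.le _),
      abs_of_nonneg (Real.rpow_nonneg h1.le _)]
    have hle : (1 + y / T₀) ^ (-T₀) ≤ 1 :=
      Real.rpow_le_one_of_one_le_of_nonpos (le_add_of_nonneg_right (by positivity)) (by linarith)
    calc y ^ (μ - 1) * (1 + y / T₀) ^ (-T₀) ≤ y ^ (μ - 1) * 1 :=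
          mul_le_mul_of_nonneg_left hle (Real.rpow_nonneg hy0.le _)
      _ = y ^ (μ - 1) := mul_one _
  have hIoi : IntegrableOn (fun y : ℝ => y ^ (μ - 1) * (1 + y / T₀) ^ (-T₀))
      (Ioi (1:ℝ)) volume := by
    have hint : IntegrableOn (fun y : ℝ => T₀ ^ T₀ * y ^ (-2 : ℝ)) (Ioi (1:ℝ)) volume :=
      (integrableOn_Ioi_rpow_of_lt (by norm_num) one_pos).const_mul _
    refine hint.mono' (hmeas.aestronglyMeasurable.restrict) ?_
    filter_upwards [ae_restrict_mem measurableSet_Ioi] with y hy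
    have hy0 : (0:ℝ) < y := lt_trans one_pos hy
    have h1 : (0:ℝ) < 1 + y / T₀ := by positivity
    rw [Real.norm_eq_abs, abs_mul, abs_of_nonneg (Real.rpow_nonneg hy0.le _),
      abs_of_nonneg (Real.rpow_nonneg h1.le _)]
    have hle : (1 + y / T₀) ^ (-T₀) ≤ (y / T₀) ^ (-T₀) := by
      apply Real.rpow_le_rpow_of_nonpos (by positivity) (by linarith) (by linarith)
    have heq : (y / T₀ : ℝ) ^ (-T₀) = T₀ ^ T₀ * y ^ (-T₀) := by
      rw [Real.div_rpow hy0.le hT₀.le, Real.rpow_neg hT₀.le, div_eq_mul_inv, inv_inv, mul_comm]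
    calc y ^ (μ - 1) * (1 + y / T₀) ^ (-T₀)
        ≤ y ^ (μ - 1) * (T₀ ^ T₀ * y ^ (-T₀)) := by
          rw [← heq]; exact mul_le_mul_of_nonneg_left hle (Real.rpow_nonneg hy0.le _)
      _ = T₀ ^ T₀ * y ^ (-2 : ℝ) := by
          rw [mul_comm (y ^ (μ - 1)), mul_assoc, ← Real.rpow_add hy0]
          congr 2
          rw [hT₀def]; ring
  have : Ioc (0:ℝ) 1 ∪ Ioi 1 = Ioi 0 := Ioc_union_Ioi_eq_Ioi (by norm_num)
  rw [← this]
  exact hIoc.union hIoi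

/-- Lemma 2.1, case `x₁ = 0`: for `μ > 0` and any `0 < x₂ ≤ ∞`,
`t^μ ∫₀^{x₂} x^{μ-1} (1+x)^{-t} dx → Γ(μ)` as `t → ∞`. -/
theorem stmt_0 (μ : ℝ) (hμ : 0 < μ) (x₂ : EReal) (hx₂ : 0 < x₂) :
    Tendsto (fun t : ℝ => t ^ μ *
        ∫ x in {x : ℝ | 0 < x ∧ (x : EReal) < x₂}, x ^ (μ - 1) * (1 + x) ^ (-t))
      atTop (nhds (Real.Gamma μ)) := by
  set S : Set ℝ := {x : ℝ | 0 < x ∧ (x : EReal) < x₂} with hSdef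
  have hSmeas : MeasurableSet S := by
    have : S = Ioi 0 ∩ ((fun x : ℝ => (x : EReal)) ⁻¹' Iio x₂) := rfl
    rw [this]
    exact measurableSet_Ioi.inter (measurable_coe_real_ereal measurableSet_Iio)
  -- the substituted family of sets and functions
  set T : ℝ → Set ℝ := fun t => {y : ℝ | 0 < y ∧ ((y / t : ℝ) : EReal) < x₂} with hTdef
  have hTmeas : ∀ t, MeasurableSet (T t) := by
    intro t
    have : T t = Ioi 0 ∩ ((fun y : ℝ => ((y / t : ℝ) : EReal)) ⁻¹' Iio x₂) := rfl
    rw [this]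
    exact measurableSet_Ioi.inter
      ((measurable_coe_real_ereal.comp (measurable_id.div_const t)) measurableSet_Iio)
  set F : ℝ → ℝ → ℝ := fun t y =>
    Set.indicator (T t) (fun y => y ^ (μ - 1) * (1 + y / t) ^ (-t)) y with hFdef
  -- Step 1: change of variables
  have key : ∀ t : ℝ, 0 < t →
      (∫ y, F t y) = t ^ μ * ∫ x in S, x ^ (μ - 1) * (1 + x) ^ (-t) := by
    intro t ht
    rw [← integral_indicator hSmeas]
    set g : ℝ → ℝ := Set.indicator S (fun x => x ^ (μ - 1) * (1 + x) ^ (-t)) with hgdef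
    have hpt : ∀ y : ℝ, F t y = t ^ (μ - 1) * g (y / t) := by
      intro y
      rw [hFdef, hgdef]
      simp only [Set.indicator_apply]
      have hmem : y ∈ T t ↔ y / t ∈ S := by
        simp only [hTdef, hSdef, mem_setOf_eq]
        constructor
        · rintro ⟨h1, h2⟩; exact ⟨div_pos h1 ht, h2⟩
        · rintro ⟨h1, h2⟩
          refine ⟨?_, h2⟩
          have := mul_pos h1 ht
          rwa [div_mul_cancel₀ _ ht.ne'] at this
      by_cases h : y ∈ T t
      · rw [if_pos h, if_pos (hmem.mp h)]
        have hy0 : 0 < y := h.1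
        rw [Real.div_rpow hy0.le ht.le]
        have htne : t ^ (μ - 1) ≠ 0 := (Real.rpow_pos_of_pos ht _).ne'
        field_simp
      · rw [if_neg h, if_neg (fun hc => h (hmem.mpr hc)), mul_zero]
    calc (∫ y, F t y) = ∫ y, t ^ (μ - 1) * g (y / t) := by
          exact integral_congr_ae (Eventually.of_forall hpt)
      _ = t ^ (μ - 1) * ∫ y, g (y / t) := integral_const_mul _ _
      _ = t ^ (μ - 1) * (|t| • ∫ x, g x) := by rw [MeasureTheory.Measure.integral_comp_div g t]
      _ = t ^ μ * ∫ x, g x := by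
          rw [abs_of_pos ht, smul_eq_mul, ← mul_assoc]
          congr 1
          rw [← Real.rpow_add_one ht.ne' (μ - 1), sub_add_cancel]
  -- Step 2: dominated convergence
  set T₀ : ℝ := μ + 1 with hT₀def
  have hT₀ : 0 < T₀ := by positivity
  have hDCT : Tendsto (fun t => ∫ y, F t y) atTop (nhds (Real.Gamma μ)) := by
    have hGamma : Real.Gamma μ =
        ∫ y, Set.indicator (Ioi (0:ℝ)) (fun y => y ^ (μ - 1) * Real.exp (-y)) y := by
      rw [integral_indicator measurableSet_Ioi, Real.Gamma_eq_integral hμ]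
      exact setIntegral_congr_fun measurableSet_Ioi (fun x _ => by ring)
    rw [hGamma]
    apply tendsto_integral_filter_of_dominated_convergence
      (Set.indicator (Ioi (0:ℝ)) (fun y => y ^ (μ - 1) * (1 + y / T₀) ^ (-T₀)))
    · -- measurability
      filter_upwards with t
      apply (Measurable.indicator ?_ (hTmeas t)).aestronglyMeasurable
      fun_prop
    · -- domination
      filter_upwards [eventually_ge_atTop T₀] with t htT₀
      filter_upwards with y
      simp only [hFdef]
      have ht0 : 0 < t := hT₀.trans_le htT₀
      by_cases h : y ∈ T t
      · have hy0 : 0 < y := h.1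
        have h1 : (0:ℝ) < 1 + y / t := by
          have := div_nonneg hy0.le ht0.le
          linarith
        rw [Set.indicator_of_mem h, Set.indicator_of_mem (mem_Ioi.mpr hy0)]
        rw [Real.norm_eq_abs, abs_mul, abs_of_nonneg (Real.rpow_nonneg hy0.le _),
          abs_of_nonneg (Real.rpow_nonneg h1.le _)]
        exact mul_le_mul_of_nonneg_left (aux_rpow_anti hy0.le hT₀ htT₀)
          (Real.rpow_nonneg hy0.le _)
      · rw [Set.indicator_of_notMem h, norm_zero]
        apply Set.indicator_nonneg
        intro y hy
        have hy' : (0:ℝ) < y := hy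
        have h1 : (0:ℝ) < 1 + y / T₀ := by positivity
        exact mul_nonneg (Real.rpow_nonneg hy'.le _) (Real.rpow_nonneg h1.le _)
    · -- integrability of the bound
      rw [integrable_indicator_iff measurableSet_Ioi]
      exact aux_integrable hμ
    · -- pointwise limit
      have hae : ∀ᵐ y : ℝ, y ≠ 0 := by
        rw [ae_iff]
        simp only [ne_eq, not_not, setOf_eq_eq_singleton]
        exact measure_singleton 0
      filter_upwards [hae] with y hy
      rcases lt_or_gt_of_ne hy with hneg | hpos
      · -- y < 0 : everything is 0
        have hF0 : ∀ t, F t y = 0 := by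
          intro t
          apply Set.indicator_of_notMem
          rw [hTdef]
          simp only [mem_setOf_eq, not_and]
          intro h; exact absurd h hneg.asymm
        have hy0 : y ∉ Ioi (0:ℝ) := fun h => hneg.asymm h
        rw [Set.indicator_of_notMem hy0]
        simp only [hF0]
        exact tendsto_const_nhds
      · -- y > 0
        have hTe : ∀ᶠ t in atTop, y ∈ T t := by
          have h1 : Tendsto (fun t : ℝ => y / t) atTop (nhds 0) := by
            simpa [div_eq_mul_inv] using tendsto_inv_atTop_zero.const_mul y
          have h2 : Tendsto (fun t : ℝ => ((y / t : ℝ) : EReal)) atTop (nhds (0 : EReal)) := by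
            simpa [Function.comp_def] using (continuous_coe_real_ereal.tendsto 0).comp h1
          filter_upwards [h2.eventually_lt_const hx₂] with t ht2
          exact ⟨hpos, ht2⟩
        have hr : Tendsto (fun t : ℝ => (1 + y / t) ^ (-t)) atTop (nhds (Real.exp (-y))) := by
          have h1 := tendsto_one_add_div_rpow_exp y
          have h2 : Tendsto (fun t : ℝ => ((1 + y / t) ^ t)⁻¹) atTop (nhds (Real.exp y)⁻¹) :=
            h1.inv₀ (Real.exp_ne_zero y)
          rw [Real.exp_neg]
          refine h2.congr' ?_
          filter_upwards [eventually_gt_atTop (0:ℝ)] with t ht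
          rw [← Real.rpow_neg (by positivity : (0:ℝ) ≤ 1 + y / t)]
        rw [Set.indicator_of_mem (mem_Ioi.mpr hpos)]
        refine (hr.const_mul (y ^ (μ - 1))).congr' ?_
        filter_upwards [hTe] with t htm
        simp only [hFdef]
        exact (Set.indicator_of_mem htm (fun y : ℝ => y ^ (μ - 1) * (1 + y / t) ^ (-t))).symm
  refine hDCT.congr' ?_
  filter_upwards [eventually_gt_atTop (0:ℝ)] with t ht
  exact (key t ht)
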